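/- Let (Y,μ) be a probability space and τ : Y → ℝ measurable with τ(y) ≥ 1 for a.e. y and μ(τ > t) ≤ C₀ t^{−β} for all t ≥ 1, where C₀ > 0 and β ∈ (0,1). Let ε ∈ (0,β) and r > 1 with r(β−ε) < β, and let r' = r/(r−1) be the conjugate exponent. Let R : L¹(Y;ℂ) → L¹(Y;ℂ) be a bounded linear operator with operator norm at most 1. Then there exists C > 0, depending only on C₀, β, ε, r, such that for all s₁, s₂ ∈ ℂ with Re s₁ ≥ 0 and Re s₂ ≥ 0, and all v ∈ L^{r'}(Y;ℂ), ‖R(e^{−s₁τ} v) − R(e^{−s₂τ} v)‖_{L¹} ≤ C |s₁ − s₂|^{β−ε} ‖v‖_{L^{r'}}. -/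

import Mathlib

open MeasureTheory
open scoped ENNReal

lemma aux_min {a x : ℝ} (ha : 0 < a) (ha1 : a ≤ 1) (hx : 0 ≤ x) :
    min 2 x ≤ 2 ^ (1 - a) * x ^ a := by
  rcases le_total x 2 with h | h
  · calc min 2 x ≤ x := min_le_right _ _
      _ = x ^ (1 - a) * x ^ a := by
          rw [← Real.rpow_add' hx (by norm_num)]; simp
      _ ≤ 2 ^ (1 - a) * x ^ a :=
          mul_le_mul_of_nonneg_right (Real.rpow_le_rpow hx h (by linarith))
            (Real.rpow_nonneg hx a)
  · calc min 2 x ≤ 2 := min_le_left _ _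
      _ = 2 ^ (1 - a) * 2 ^ a := by
          rw [← Real.rpow_add' (by norm_num) (by norm_num)]; simp
      _ ≤ 2 ^ (1 - a) * x ^ a :=
          mul_le_mul_of_nonneg_left (Real.rpow_le_rpow (by norm_num) h ha.le)
            (Real.rpow_nonneg (by norm_num) _)

lemma aux_exp {s₁ s₂ : ℂ} (h₁ : 0 ≤ s₁.re) (h₂ : 0 ≤ s₂.re) {t : ℝ} (ht : 0 ≤ t) :
    ‖Complex.exp (-s₁ * t) - Complex.exp (-s₂ * t)‖ ≤ min 2 (‖s₁ - s₂‖ * t) := by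
  refine le_min ?_ ?_
  · have b : ∀ s : ℂ, 0 ≤ s.re → ‖Complex.exp (-s * t)‖ ≤ 1 := by
      intro s hs
      rw [Complex.norm_exp]
      apply Real.exp_le_one_iff.mpr
      have : (-s * (t:ℂ)).re = -s.re * t := by simp
      rw [this]
      exact mul_nonpos_of_nonpos_of_nonneg (by linarith) ht
    calc ‖Complex.exp (-s₁ * t) - Complex.exp (-s₂ * t)‖
        ≤ ‖Complex.exp (-s₁ * t)‖ + ‖Complex.exp (-s₂ * t)‖ := norm_sub_le _ _
      _ ≤ 1 + 1 := add_le_add (b s₁ h₁) (b s₂ h₂)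
      _ = 2 := by norm_num
  · set g : ℝ → ℂ := fun u => Complex.exp ((-(s₁ - s₂) * t) * u + (-s₂ * t)) with hg
    have hderiv : ∀ u ∈ Set.Icc (0:ℝ) 1, HasDerivWithinAt g
        (Complex.exp ((-(s₁ - s₂) * t) * u + (-s₂ * t)) * (-(s₁ - s₂) * t))
        (Set.Icc (0:ℝ) 1) u := by
      intro u hu
      have h0 : HasDerivAt (fun u : ℝ => (u : ℂ)) 1 u := by
        simpa using (hasDerivAt_id u).ofReal_comp
      have h1 : HasDerivAt (fun u : ℝ => (-(s₁ - s₂) * t) * (u:ℂ) + (-s₂ * t))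
          (-(s₁ - s₂) * t) u := by
        simpa using ((h0.const_mul (-(s₁ - s₂) * (t:ℂ))).add_const (-s₂ * t))
      exact (h1.cexp).hasDerivWithinAt
    have bound : ∀ u ∈ Set.Icc (0:ℝ) 1,
        ‖Complex.exp ((-(s₁ - s₂) * t) * u + (-s₂ * t)) * (-(s₁ - s₂) * t)‖
          ≤ ‖s₁ - s₂‖ * t := by
      intro u hu
      rw [norm_mul]
      have e1 : ‖Complex.exp ((-(s₁ - s₂) * t) * u + (-s₂ * t))‖ ≤ 1 := by
        rw [Complex.norm_exp]
        apply Real.exp_le_one_iff.mpr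
        have : ((-(s₁ - s₂) * t) * u + (-s₂ * t)).re
            = -(((1 - u) * s₂.re + u * s₁.re) * t) := by
          simp [Complex.add_re, Complex.mul_re]; ring_nf
        rw [this]
        have hnn : 0 ≤ (1 - u) * s₂.re + u * s₁.re := by
          have h3 := hu.1; have h4 := hu.2
          have : 0 ≤ 1 - u := by linarith
          positivity
        nlinarith
      have e2 : ‖-(s₁ - s₂) * (t:ℂ)‖ = ‖s₁ - s₂‖ * t := by
        rw [norm_mul, norm_neg]
        simp [Complex.norm_real, abs_of_nonneg ht]
      calc _ ≤ 1 * ‖-(s₁ - s₂) * (t:ℂ)‖ := by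
              apply mul_le_mul_of_nonneg_right e1 (norm_nonneg _)
        _ = ‖s₁ - s₂‖ * t := by rw [one_mul, e2]
    have key := Convex.norm_image_sub_le_of_norm_hasDerivWithin_le hderiv bound
      (convex_Icc (0:ℝ) 1) (Set.left_mem_Icc.mpr zero_le_one)
      (Set.right_mem_Icc.mpr zero_le_one)
    have g1 : g 1 = Complex.exp (-s₁ * t) := by
      simp only [hg, Complex.ofReal_one, mul_one]
      ring_nf
    have g0 : g 0 = Complex.exp (-s₂ * t) := by
      simp [hg]
    calc ‖Complex.exp (-s₁ * t) - Complex.exp (-s₂ * t)‖ = ‖g 1 - g 0‖ := by rw [g1, g0]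
      _ ≤ (‖s₁ - s₂‖ * t) * ‖(1:ℝ) - 0‖ := key
      _ = ‖s₁ - s₂‖ * t := by simp

lemma aux_moment {C₀ β q : ℝ} (hC₀ : 0 < C₀) (hq : 0 < q) (hqβ : q < β)
    {Y : Type} [MeasurableSpace Y] (μ : Measure Y) [IsProbabilityMeasure μ]
    {τ : Y → ℝ} (hτ : Measurable τ) (hτ1 : ∀ᵐ y ∂μ, 1 ≤ τ y)
    (tail : ∀ t : ℝ, 1 ≤ t → μ {y | t < τ y} ≤ ENNReal.ofReal (C₀ * t ^ (-β))) :
    ∫⁻ y, ENNReal.ofReal (τ y ^ q) ∂μ ≤ ENNReal.ofReal (1 + q * (C₀ / (β - q))) := by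
  have f_nn : 0 ≤ᵐ[μ] τ := hτ1.mono fun y hy => by simpa using le_trans zero_le_one hy
  rw [lintegral_rpow_eq_lintegral_meas_lt_mul μ f_nn hτ.aemeasurable hq]
  have hsplit : (Set.Ioi (0:ℝ)) = Set.Ioc 0 1 ∪ Set.Ioi 1 :=
    (Set.Ioc_union_Ioi_eq_Ioi zero_le_one).symm
  rw [hsplit, lintegral_union measurableSet_Ioi (Set.Ioc_disjoint_Ioi le_rfl)]
  have I1 : ∫⁻ t in Set.Ioc (0:ℝ) 1, μ {a | t < τ a} * ENNReal.ofReal (t ^ (q - 1))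
      ≤ ENNReal.ofReal (1 / q) := by
    have step : ∫⁻ t in Set.Ioc (0:ℝ) 1, μ {a | t < τ a} * ENNReal.ofReal (t ^ (q - 1))
        ≤ ∫⁻ t in Set.Ioc (0:ℝ) 1, ENNReal.ofReal (t ^ (q - 1)) := by
      refine lintegral_mono fun t => ?_
      calc μ {a | t < τ a} * ENNReal.ofReal (t ^ (q - 1))
          ≤ 1 * ENNReal.ofReal (t ^ (q - 1)) :=
            mul_le_mul_left prob_le_one _
        _ = _ := one_mul _
    refine step.trans ?_
    have hint : IntegrableOn (fun t : ℝ => t ^ (q - 1)) (Set.Ioc 0 1) := by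
      rw [← intervalIntegrable_iff_integrableOn_Ioc_of_le zero_le_one]
      exact intervalIntegral.intervalIntegrable_rpow' (by linarith)
    rw [← ofReal_integral_eq_lintegral_ofReal hint ?nn]
    case nn =>
      filter_upwards [ae_restrict_mem measurableSet_Ioc] with t ht
      exact Real.rpow_nonneg ht.1.le _
    apply ENNReal.ofReal_le_ofReal
    rw [← intervalIntegral.integral_of_le zero_le_one,
      integral_rpow (Or.inl (by linarith))]
    rw [sub_add_cancel, Real.one_rpow, Real.zero_rpow hq.ne', one_div]
    simp
  have I2 : ∫⁻ t in Set.Ioi (1:ℝ), μ {a | t < τ a} * ENNReal.ofReal (t ^ (q - 1))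
      ≤ ENNReal.ofReal (C₀ / (β - q)) := by
    have step : ∫⁻ t in Set.Ioi (1:ℝ), μ {a | t < τ a} * ENNReal.ofReal (t ^ (q - 1))
        ≤ ∫⁻ t in Set.Ioi (1:ℝ), ENNReal.ofReal (C₀ * t ^ (q - 1 - β)) := by
      refine setLIntegral_mono' measurableSet_Ioi fun t ht => ?_
      have ht1 : (1:ℝ) ≤ t := le_of_lt ht
      have ht0 : (0:ℝ) < t := lt_of_lt_of_le one_pos ht1
      calc μ {a | t < τ a} * ENNReal.ofReal (t ^ (q - 1))
          ≤ ENNReal.ofReal (C₀ * t ^ (-β)) * ENNReal.ofReal (t ^ (q - 1)) :=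
            mul_le_mul_left (tail t ht1) _
        _ = ENNReal.ofReal (C₀ * t ^ (q - 1 - β)) := by
            rw [← ENNReal.ofReal_mul (by positivity)]
            congr 1
            rw [mul_assoc, ← Real.rpow_add ht0]
            congr 1
            ring_nf
    refine step.trans ?_
    have hint : IntegrableOn (fun t : ℝ => C₀ * t ^ (q - 1 - β)) (Set.Ioi 1) :=
      (integrableOn_Ioi_rpow_of_lt (by linarith) one_pos).const_mul C₀
    rw [← ofReal_integral_eq_lintegral_ofReal hint ?nn2]
    case nn2 =>
      filter_upwards [ae_restrict_mem measurableSet_Ioi] with t ht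
      have : (0:ℝ) < t := lt_trans one_pos ht
      positivity
    apply ENNReal.ofReal_le_ofReal
    rw [MeasureTheory.integral_const_mul, integral_Ioi_rpow_of_lt (by linarith) one_pos]
    rw [Real.one_rpow]
    rw [show q - 1 - β + 1 = -(β - q) by ring, neg_div_neg_eq, mul_one_div]
  calc ENNReal.ofReal q * (_ + _)
      ≤ ENNReal.ofReal q * (ENNReal.ofReal (1/q) + ENNReal.ofReal (C₀ / (β - q))) :=
        mul_le_mul_right (add_le_add I1 I2) _
    _ = ENNReal.ofReal (q * (1/q + C₀ / (β - q))) := by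
        have hbq : (0:ℝ) < β - q := by linarith
        rw [← ENNReal.ofReal_add (by positivity) (by positivity),
          ← ENNReal.ofReal_mul hq.le]
    _ = ENNReal.ofReal (1 + q * (C₀ / (β - q))) := by
        congr 1
        have hbq : β - q ≠ 0 := ne_of_gt (by linarith)
        field_simp

theorem stmt15 (C₀ β ε r : ℝ) (hC₀ : 0 < C₀) (hβ : β ∈ Set.Ioo (0:ℝ) 1)
    (hε : ε ∈ Set.Ioo 0 β) (hr : 1 < r) (hrβ : r * (β - ε) < β) :
    ∃ C : ℝ, 0 < C ∧
      ∀ (Y : Type) [MeasurableSpace Y] (μ : Measure Y) [IsProbabilityMeasure μ]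
        (τ : Y → ℝ), Measurable τ → (∀ᵐ y ∂μ, 1 ≤ τ y) →
      (∀ t : ℝ, 1 ≤ t → μ {y | t < τ y} ≤ ENNReal.ofReal (C₀ * t ^ (-β))) →
      ∀ R : Lp ℂ 1 μ →L[ℂ] Lp ℂ 1 μ, ‖R‖ ≤ 1 →
      ∀ s₁ s₂ : ℂ, 0 ≤ s₁.re → 0 ≤ s₂.re →
      ∀ v : Y → ℂ, MemLp v (ENNReal.ofReal (r / (r - 1))) μ →
      ∀ h₁ : MemLp (fun y => Complex.exp (-s₁ * (τ y : ℂ)) * v y) 1 μ,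
      ∀ h₂ : MemLp (fun y => Complex.exp (-s₂ * (τ y : ℂ)) * v y) 1 μ,
      ‖R (MemLp.toLp _ h₁) - R (MemLp.toLp _ h₂)‖ ≤
        C * ‖s₁ - s₂‖ ^ (β - ε) *
          (eLpNorm v (ENNReal.ofReal (r / (r - 1))) μ).toReal := by
  obtain ⟨hβ0, hβ1⟩ := hβ
  obtain ⟨hε0, hεβ⟩ := hε
  set a : ℝ := β - ε with ha_def
  have ha0 : 0 < a := by simp only [ha_def]; linarith
  have ha1 : a ≤ 1 := by simp only [ha_def]; linarith
  set q : ℝ := r * a with hq_def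
  have hq0 : 0 < q := by positivity
  have hqβ : q < β := hrβ
  set K : ℝ := 1 + q * (C₀ / (β - q)) with hK_def
  have hK0 : 0 < K := by
    have : 0 < β - q := by linarith
    positivity
  set M : ℝ := K ^ (1 / r) with hM_def
  have hM0 : 0 < M := Real.rpow_pos_of_pos hK0 _
  refine ⟨2 ^ (1 - a) * M, by positivity, ?_⟩
  intro Y _ μ _ τ hτ hτ1 tail R hR s₁ s₂ hs₁ hs₂ v hv h₁ h₂
  set r' : ℝ := r / (r - 1) with hr'_def
  have hr'0 : 0 < r' := by
    have : 0 < r - 1 := by linarith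
    positivity
  set d : ℝ := ‖s₁ - s₂‖ with hd_def
  have hd0 : 0 ≤ d := norm_nonneg _
  set c : ℝ := 2 ^ (1 - a) * d ^ a with hc_def
  have hc0 : 0 ≤ c := by positivity
  set φ : Y → ℂ := fun y => Complex.exp (-s₁ * (τ y : ℂ)) - Complex.exp (-s₂ * (τ y : ℂ))
    with hφ_def
  have hφm : Measurable φ := by
    apply Measurable.sub <;>
      exact Complex.measurable_exp.comp (measurable_const.mul (Complex.measurable_ofReal.comp hτ))
  -- conjugate exponents
  have hconj : (1:ℝ≥0∞) / 1 = 1 / ENNReal.ofReal r + 1 / ENNReal.ofReal r' := by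
    rw [one_div, one_div, one_div, inv_one,
      ← ENNReal.ofReal_inv_of_pos (by linarith), ← ENNReal.ofReal_inv_of_pos hr'0,
      ← ENNReal.ofReal_add (by positivity) (by positivity)]
    rw [show r⁻¹ + r'⁻¹ = 1 by
      rw [hr'_def]
      field_simp
      ring]
    simp
  -- Hölder
  have hHolder : eLpNorm (φ • v) 1 μ
      ≤ eLpNorm φ (ENNReal.ofReal r) μ * eLpNorm v (ENNReal.ofReal r') μ :=
    eLpNorm_smul_le_mul_eLpNorm hv.1 hφm.aestronglyMeasurable
      (hpqr := ⟨by simpa [one_div] using hconj.symm⟩)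
  -- pointwise bound on φ
  have hφbound : ∀ᵐ y ∂μ, ‖φ y‖ ≤ c * τ y ^ a := by
    filter_upwards [hτ1] with y hy
    have ht0 : (0:ℝ) ≤ τ y := le_trans zero_le_one hy
    calc ‖φ y‖ ≤ min 2 (d * τ y) := aux_exp hs₁ hs₂ ht0
      _ ≤ 2 ^ (1 - a) * (d * τ y) ^ a := aux_min ha0 ha1 (by positivity)
      _ = c * τ y ^ a := by
          rw [Real.mul_rpow hd0 ht0, hc_def]; ring
  -- bound eLpNorm of τ ^ a in L^r
  have hτa : eLpNorm (fun y => τ y ^ a) (ENNReal.ofReal r) μ ≤ ENNReal.ofReal M := by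
    rw [eLpNorm_eq_lintegral_rpow_enorm_toReal (by simp [ENNReal.ofReal_pos]; linarith)
      ENNReal.ofReal_ne_top]
    rw [ENNReal.toReal_ofReal (by linarith)]
    have hcong : ∫⁻ y, ‖τ y ^ a‖ₑ ^ r ∂μ = ∫⁻ y, ENNReal.ofReal (τ y ^ q) ∂μ := by
      refine lintegral_congr_ae ?_
      filter_upwards [hτ1] with y hy
      have ht0 : (0:ℝ) ≤ τ y := le_trans zero_le_one hy
      rw [Real.enorm_eq_ofReal (Real.rpow_nonneg ht0 _),
        ENNReal.ofReal_rpow_of_nonneg (Real.rpow_nonneg ht0 _) (by linarith),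
        ← Real.rpow_mul ht0, mul_comm a r]
    rw [hcong]
    calc (∫⁻ y, ENNReal.ofReal (τ y ^ q) ∂μ) ^ (1 / r)
        ≤ (ENNReal.ofReal K) ^ (1 / r) := by
          exact ENNReal.rpow_le_rpow (aux_moment hC₀ hq0 hqβ μ hτ hτ1 tail) (by positivity)
      _ = ENNReal.ofReal M := by
          rw [ENNReal.ofReal_rpow_of_nonneg hK0.le (by positivity)]
  have hφLr : eLpNorm φ (ENNReal.ofReal r) μ ≤ ENNReal.ofReal (c * M) := by
    calc eLpNorm φ (ENNReal.ofReal r) μ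
        ≤ eLpNorm (fun y => c * τ y ^ a) (ENNReal.ofReal r) μ :=
          eLpNorm_mono_ae_real hφbound
      _ = ‖c‖ₑ * eLpNorm (fun y => τ y ^ a) (ENNReal.ofReal r) μ := by
          rw [← eLpNorm_const_smul c (fun y => τ y ^ a) (ENNReal.ofReal r) μ]
          rfl
      _ ≤ ENNReal.ofReal c * ENNReal.ofReal M := by
          rw [Real.enorm_eq_ofReal hc0]
          exact mul_le_mul_right hτa _
      _ = ENNReal.ofReal (c * M) := (ENNReal.ofReal_mul hc0).symm
  -- main estimate
  have hfun : (fun y => Complex.exp (-s₁ * (τ y : ℂ)) * v y)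
      - (fun y => Complex.exp (-s₂ * (τ y : ℂ)) * v y) = φ • v := by
    funext y
    simp only [Pi.sub_apply, Pi.smul_apply', Pi.smul_apply, smul_eq_mul, hφ_def]
    ring
  have hNne : eLpNorm v (ENNReal.ofReal r') μ ≠ ∞ := hv.2.ne
  have key : eLpNorm ((fun y => Complex.exp (-s₁ * (τ y : ℂ)) * v y)
      - fun y => Complex.exp (-s₂ * (τ y : ℂ)) * v y) 1 μ
      ≤ ENNReal.ofReal (c * M) * eLpNorm v (ENNReal.ofReal r') μ := by
    rw [hfun]
    exact hHolder.trans (mul_le_mul_left hφLr _)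
  calc ‖R (MemLp.toLp _ h₁) - R (MemLp.toLp _ h₂)‖
      = ‖R (MemLp.toLp _ h₁ - MemLp.toLp _ h₂)‖ := by rw [map_sub]
    _ ≤ ‖R‖ * ‖MemLp.toLp _ h₁ - MemLp.toLp _ h₂‖ := R.le_opNorm _
    _ ≤ 1 * ‖MemLp.toLp _ h₁ - MemLp.toLp _ h₂‖ :=
        mul_le_mul_of_nonneg_right hR (norm_nonneg _)
    _ = ‖(h₁.sub h₂).toLp ((fun y => Complex.exp (-s₁ * (τ y : ℂ)) * v y)
          - fun y => Complex.exp (-s₂ * (τ y : ℂ)) * v y)‖ := by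
        rw [one_mul, MemLp.toLp_sub]
    _ = (eLpNorm ((fun y => Complex.exp (-s₁ * (τ y : ℂ)) * v y)
          - fun y => Complex.exp (-s₂ * (τ y : ℂ)) * v y) 1 μ).toReal := Lp.norm_toLp _ _
    _ ≤ (ENNReal.ofReal (c * M) * eLpNorm v (ENNReal.ofReal r') μ).toReal :=
        ENNReal.toReal_mono (ENNReal.mul_ne_top ENNReal.ofReal_ne_top hNne) key
    _ = (c * M) * (eLpNorm v (ENNReal.ofReal r') μ).toReal := by
        rw [ENNReal.toReal_mul, ENNReal.toReal_ofReal (by positivity)]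
    _ = 2 ^ (1 - a) * M * d ^ a * (eLpNorm v (ENNReal.ofReal r') μ).toReal := by
        rw [hc_def]; ring
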